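/- If A and B are Hermitian positive semidefinite n×n matrices with A ⪰ B, then det(I + A·Q) ≥ det(I + B·Q) for every Hermitian positive semidefinite Q. -/

import Mathlib

open Matrix
open scoped ComplexOrder
open scoped MatrixOrder

/-- det(1+M) for PSD M is a real number ≥ 1. -/
lemma det_one_add_psd {n : ℕ} {M : Matrix (Fin n) (Fin n) ℂ} (hM : M.PosSemidef) :
    ∃ r : ℝ, 1 ≤ r ∧ (1 + M).det = (r : ℂ) := by
  have hH := hM.1
  set U : Matrix (Fin n) (Fin n) ℂ := (hH.eigenvectorUnitary : Matrix (Fin n) (Fin n) ℂ)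
  have hU : U * star U = 1 := (Matrix.mem_unitaryGroup_iff).mp (hH.eigenvectorUnitary).2
  set D : Matrix (Fin n) (Fin n) ℂ := diagonal (RCLike.ofReal ∘ hH.eigenvalues)
  refine ⟨∏ i, (1 + hH.eigenvalues i), ?_, ?_⟩
  · have h : ∀ i ∈ (Finset.univ : Finset (Fin n)), (1:ℝ) ≤ 1 + hH.eigenvalues i :=
      fun i _ => by linarith [hM.eigenvalues_nonneg i]
    calc (1:ℝ) = ∏ _i : Fin n, (1:ℝ) := by simp
      _ ≤ ∏ i, (1 + hH.eigenvalues i) := Finset.prod_le_prod (by simp) h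
  · have key : (1 : Matrix (Fin n) (Fin n) ℂ) + M = U * (1 + D) * star U := by
      rw [Matrix.mul_add, Matrix.add_mul, Matrix.mul_one, hU]
      exact congrArg (1 + ·) hH.spectral_theorem
    rw [key, det_mul_right_comm, hU, one_mul]
    rw [show (1 : Matrix (Fin n) (Fin n) ℂ) + D
        = diagonal (fun i => 1 + (hH.eigenvalues i : ℂ)) by
      rw [← Matrix.diagonal_one, ← diagonal_add]; rfl]
    rw [det_diagonal]
    push_cast
    rfl

/-- Monotonicity: det(1+Y+D) = det(1+Y) * s with s ≥ 1, for PSD Y, D. -/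
lemma det_one_add_add_psd {n : ℕ} {Y D : Matrix (Fin n) (Fin n) ℂ}
    (hY : Y.PosSemidef) (hD : D.PosSemidef) :
    ∃ r s : ℝ, 1 ≤ r ∧ 1 ≤ s ∧ (1 + Y).det = (r : ℂ) ∧ (1 + Y + D).det = ((r * s : ℝ) : ℂ) := by
  obtain ⟨r, hr, hrdet⟩ := det_one_add_psd hY
  have h1Y : (1 + Y).PosSemidef := by
    simpa using (Matrix.PosSemidef.add (Matrix.PosSemidef.one
      (n := Fin n) (R := ℂ)) hY)
  set T : Matrix (Fin n) (Fin n) ℂ := CFC.sqrt (1 + Y) with hT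
  have hTT : T * T = 1 + Y := CFC.sqrt_mul_sqrt_self _ h1Y.nonneg
  have hTH : T.IsHermitian := (CFC.sqrt_nonneg _).posSemidef.1
  have hdetT : IsUnit T.det := by
    have : T.det * T.det = (r : ℂ) := by rw [← det_mul, hTT, hrdet]
    have hne : T.det ≠ 0 := by
      intro h
      rw [h, mul_zero] at this
      exact_mod_cast absurd this.symm (by positivity)
    exact isUnit_iff_ne_zero.mpr hne
  have hTinv : T⁻¹.IsHermitian := hTH.inv
  have hM : (T⁻¹ * D * T⁻¹).PosSemidef := by
    have := hD.conjTranspose_mul_mul_same (B := T⁻¹)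
    rwa [hTinv.eq] at this
  obtain ⟨s, hs, hsdet⟩ := det_one_add_psd hM
  refine ⟨r, s, hr, hs, hrdet, ?_⟩
  have key : 1 + Y + D = T * (1 + T⁻¹ * D * T⁻¹) * T := by
    rw [Matrix.mul_add, Matrix.add_mul, Matrix.mul_one, hTT]
    congr 1
    rw [← Matrix.mul_assoc, ← Matrix.mul_assoc, Matrix.mul_nonsing_inv _ hdetT, Matrix.one_mul,
      Matrix.mul_assoc, Matrix.nonsing_inv_mul _ hdetT, Matrix.mul_one]
  rw [key, det_mul_right_comm, det_mul, hTT, hrdet, hsdet]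
  push_cast
  ring

theorem stmt_7 (n : ℕ) (A B Q : Matrix (Fin n) (Fin n) ℂ)
    (hA : A.PosSemidef) (hB : B.PosSemidef) (hAB : (A - B).PosSemidef)
    (hQ : Q.PosSemidef) :
    (1 + A * Q).det.im = 0 ∧ (1 + B * Q).det.im = 0 ∧
    (1 + B * Q).det.re ≤ (1 + A * Q).det.re := by
  set S : Matrix (Fin n) (Fin n) ℂ := CFC.sqrt Q with hSdef
  have hSS : S * S = Q := CFC.sqrt_mul_sqrt_self _ hQ.nonneg
  have hSH : S.IsHermitian := (CFC.sqrt_nonneg _).posSemidef.1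
  have hX : (S * B * S).PosSemidef := by
    have := hB.conjTranspose_mul_mul_same (B := S); rwa [hSH.eq] at this
  have hDp : (S * (A - B) * S).PosSemidef := by
    have := hAB.conjTranspose_mul_mul_same (B := S); rwa [hSH.eq] at this
  obtain ⟨r, s, hr, hs, hrdet, hrsdet⟩ := det_one_add_add_psd hX hDp
  have hdetB : (1 + B * Q).det = (r : ℂ) := by
    rw [← hSS, ← Matrix.mul_assoc, det_one_add_mul_comm (B * S) S, ← Matrix.mul_assoc, hrdet]
  have hdetA : (1 + A * Q).det = ((r * s : ℝ) : ℂ) := by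
    rw [← hSS, ← Matrix.mul_assoc, det_one_add_mul_comm (A * S) S, ← Matrix.mul_assoc]
    rw [show S * A * S = S * B * S + S * (A - B) * S by noncomm_ring]
    rw [← add_assoc, hrsdet]
  refine ⟨by rw [hdetA]; simp, by rw [hdetB]; simp, ?_⟩
  rw [hdetA, hdetB]
  simp only [Complex.ofReal_re]
  nlinarith
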